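/- Detailed balance: Let N ≥ 2, d ≥ 1, and let the rates satisfy C_+ > 0, C_- > 0, C_E ≥ 0, C_A > 0, C_C > 0. Fix ρ ∈ (-1,1). Then for every ordered pair b = (x,y) of nearest-neighbour sites of the discrete torus T^d_N = (Z/NZ)^d and every b-active configuration η ∈ {-1,0,1}^{T^d_N}, one has c_b(η)·ν_ρ({η}) = c_{b'}(η^{(x,y)})·ν_ρ({η^{(x,y)}}), where b' = (y,x) is the reversed bond. -/

import Mathlib

open Finset

/-- Spin value of a configuration at a site: the `Fin 3` values `0, 1, 2`
code the spins `-1, 0, 1` respectively. -/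
def spin {V : Type*} (η : V → Fin 3) (x : V) : ℤ := (η x : ℤ) - 1

/-- `η` is `(x,y)`-active: the spin pattern `(η(x), η(y))` belongs to
`{(1,0), (0,-1), (-1,1), (1,-1), (0,0)}` (in `Fin 3` coding: `(2,1), (1,0), (0,2), (2,0), (1,1)`). -/
def IsActive {V : Type*} (x y : V) (η : V → Fin 3) : Prop :=
  (η x = 2 ∧ η y = 1) ∨ (η x = 1 ∧ η y = 0) ∨ (η x = 0 ∧ η y = 2) ∨
    (η x = 2 ∧ η y = 0) ∨ (η x = 1 ∧ η y = 1)

/-- The configuration `η^{(x,y)}`: swap the values at `x` and `y` in the three exchange cases,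
annihilate a `(+,-)` pair, or create a `(-,+)` pair from two empty sites. -/
def cfgFlip {V : Type*} [DecidableEq V] (x y : V) (η : V → Fin 3) : V → Fin 3 := fun z =>
  if z = x then (if η x = 2 ∧ η y = 0 then 1 else if η x = 1 ∧ η y = 1 then 0 else η y)
  else if z = y then (if η x = 2 ∧ η y = 0 then 1 else if η x = 1 ∧ η y = 1 then 2 else η x)
  else η z

/-- The jump rate `c_{(x,y)}(η)`. -/
def rate {V : Type*} (Cp Cm CE CA CC : ℝ) (x y : V) (η : V → Fin 3) : ℝ :=
  if η x = 2 ∧ η y = 1 then Cp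
  else if η x = 1 ∧ η y = 0 then Cm
  else if η x = 0 ∧ η y = 2 then CE
  else if η x = 2 ∧ η y = 0 then CA
  else if η x = 1 ∧ η y = 1 then CC
  else 0

/-- `Φ(ρ)`, the probability of an empty site, with `β = C_C / C_A`. -/
noncomputable def Phi (β ρ : ℝ) : ℝ :=
  if β = 1 / 4 then (1 - ρ ^ 2) / 2
  else (1 - Real.sqrt (4 * β + ρ ^ 2 - 4 * β * ρ ^ 2)) / (1 - 4 * β)

/-- The single-site marginal weight of `ν_ρ`: spin `-1` (value `0`) gets `(1-Φ(ρ)-ρ)/2`,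
spin `0` (value `1`) gets `Φ(ρ)`, spin `1` (value `2`) gets `(1-Φ(ρ)+ρ)/2`. -/
noncomputable def wgt (β ρ : ℝ) : Fin 3 → ℝ := fun v =>
  if v = 0 then (1 - Phi β ρ - ρ) / 2 else if v = 1 then Phi β ρ else (1 - Phi β ρ + ρ) / 2

/-- The product measure `ν_ρ` (as a weight function on configurations on a finite site set). -/
noncomputable def nuProd {V : Type*} [Fintype V] (β ρ : ℝ) (η : V → Fin 3) : ℝ :=
  ∏ x, wgt β ρ (η x)

/-- `x` and `y` are nearest neighbours on the discrete torus `(ℤ/Nℤ)^d`. -/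
def torusNbr {d N : ℕ} (x y : Fin d → ZMod N) : Prop :=
  ∃ i : Fin d, y = x + Pi.single i 1 ∨ y = x - Pi.single i 1

lemma phi_key (β ρ : ℝ) (hβ : 0 < β) (hρ : ρ ^ 2 < 1) :
    (1 - Phi β ρ - ρ) / 2 * ((1 - Phi β ρ + ρ) / 2) = β * Phi β ρ ^ 2 := by
  unfold Phi
  split_ifs with h
  · subst h; ring
  · have hsq : Real.sqrt (4 * β + ρ ^ 2 - 4 * β * ρ ^ 2) ^ 2
        = 4 * β + ρ ^ 2 - 4 * β * ρ ^ 2 := Real.sq_sqrt (by nlinarith)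
    have h4 : (1 : ℝ) - 4 * β ≠ 0 := fun h0 => h (by linarith)
    set s := Real.sqrt (4 * β + ρ ^ 2 - 4 * β * ρ ^ 2)
    field_simp
    linear_combination (1 - 4 * β) * hsq

lemma prod_split {V : Type*} [Fintype V] [DecidableEq V] {x y : V} (hxy : x ≠ y)
    (f : V → ℝ) :
    ∏ z, f z = f x * (f y * ∏ z ∈ (univ.erase x).erase y, f z) := by
  rw [Finset.mul_prod_erase _ _ (Finset.mem_erase.2 ⟨hxy.symm, Finset.mem_univ y⟩),
    Finset.mul_prod_erase _ _ (Finset.mem_univ x)]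

/-- detailed balance `c_b(η) ν_ρ(η) = c_{b'}(η^{(x,y)}) ν_ρ(η^{(x,y)})`. -/
theorem two_species_detailed_balance
    (N d : ℕ) [NeZero N] (hN : 2 ≤ N) (hd : 1 ≤ d)
    (Cp Cm CE CA CC : ℝ)
    (hCp : 0 < Cp) (hCm : 0 < Cm) (hCE : 0 ≤ CE) (hCA : 0 < CA) (hCC : 0 < CC)
    (ρ : ℝ) (hρ : ρ ∈ Set.Ioo (-1 : ℝ) 1)
    (x y : Fin d → ZMod N) (hxy : torusNbr x y)
    (η : (Fin d → ZMod N) → Fin 3) (hact : IsActive x y η) :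
    rate Cp Cm CE CA CC x y η * nuProd (CC / CA) ρ η =
      rate Cp Cm CE CA CC y x (cfgFlip x y η) * nuProd (CC / CA) ρ (cfgFlip x y η) := by
  have hone : (1 : ZMod N) ≠ 0 := by
    haveI : Fact (1 < N) := ⟨hN⟩
    exact one_ne_zero
  have hne : x ≠ y := by
    obtain ⟨i, hi | hi⟩ := hxy
    · intro hxeq
      have h2 := congrFun hi i
      rw [← hxeq] at h2
      simp only [Pi.add_apply, Pi.single_eq_same] at h2
      exact hone (left_eq_add.mp h2)
    · intro hxeq
      have h2 := congrFun hi i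
      rw [← hxeq] at h2
      simp only [Pi.sub_apply, Pi.single_eq_same] at h2
      exact hone (sub_eq_self.mp h2.symm)
  set β := CC / CA with hβdef
  have hβ : 0 < β := div_pos hCC hCA
  have hρ2 : ρ ^ 2 < 1 := by
    rcases hρ with ⟨h1, h2⟩
    nlinarith
  have key : (1 - Phi β ρ - ρ) / 2 * ((1 - Phi β ρ + ρ) / 2) = β * Phi β ρ ^ 2 :=
    phi_key β ρ hβ hρ2
  have key' : CA * ((1 - Phi β ρ - ρ) / 2 * ((1 - Phi β ρ + ρ) / 2)) = CC * Phi β ρ ^ 2 := by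
    rw [key, hβdef]; field_simp
  have w0 : wgt β ρ 0 = (1 - Phi β ρ - ρ) / 2 := if_pos rfl
  have w1 : wgt β ρ 1 = Phi β ρ := by
    rw [wgt]; rw [if_neg (by decide), if_pos rfl]
  have w2 : wgt β ρ 2 = (1 - Phi β ρ + ρ) / 2 := by
    rw [wgt]; rw [if_neg (by decide), if_neg (by decide)]
  have hflip_off : ∀ z, z ≠ x → z ≠ y → cfgFlip x y η z = η z := by
    intro z hzx hzy; simp [cfgFlip, hzx, hzy]
  have hrest : ∏ z ∈ (univ.erase x).erase y, wgt β ρ (cfgFlip x y η z)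
      = ∏ z ∈ (univ.erase x).erase y, wgt β ρ (η z) := by
    refine Finset.prod_congr rfl fun z hz => ?_
    rw [Finset.mem_erase, Finset.mem_erase] at hz
    rw [hflip_off z hz.2.1 hz.1]
  have hflipx : cfgFlip x y η x
      = (if η x = 2 ∧ η y = 0 then 1 else if η x = 1 ∧ η y = 1 then 0 else η y) := by
    simp [cfgFlip]
  have hflipy : cfgFlip x y η y
      = (if η x = 2 ∧ η y = 0 then 1 else if η x = 1 ∧ η y = 1 then 2 else η x) := by
    simp [cfgFlip, hne.symm]
  set P := ∏ z ∈ (univ.erase x).erase y, wgt β ρ (η z) with hP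
  rw [nuProd, nuProd, prod_split hne, prod_split hne, hrest, ← hP]
  rcases hact with ⟨hx, hy⟩ | ⟨hx, hy⟩ | ⟨hx, hy⟩ | ⟨hx, hy⟩ | ⟨hx, hy⟩ <;>
      rw [hx, hy] at hflipx hflipy <;>
      [rw [if_neg (by decide), if_neg (by decide)] at hflipx hflipy;
       rw [if_neg (by decide), if_neg (by decide)] at hflipx hflipy;
       rw [if_neg (by decide), if_neg (by decide)] at hflipx hflipy;
       rw [if_pos ⟨rfl, rfl⟩] at hflipx hflipy;
       rw [if_neg (by decide), if_pos ⟨rfl, rfl⟩] at hflipx hflipy] <;>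
    rw [rate, rate, hx, hy, hflipx, hflipy] <;>
    simp only [Fin.reduceEq, if_true, if_false, and_true, true_and, and_false, false_and,
      ite_true, ite_false, and_self] <;>
    simp only [w0, w1, w2] <;>
    [ring; ring; ring; linear_combination P * key'; linear_combination -P * key']
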